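/- arXiv:2107.13730 — 6 statements merged into one kernel-verified Lean document; each statement's English description precedes it below -/
import Mathlib

section
/- Let X be a separable Banach space and C ⊆ X a closed convex set. Suppose (z_n*) ⊂ X* and (γ_n) ⊂ ℝ are sequences such that C = ⋂_{n∈ℕ} { u ∈ X : ⟨z_n*, u⟩ ≤ γ_n }. Define ξ_n := 1 + ‖z_n*‖ + |γ_n| and φ(y) := ∑_{n∈ℕ} 2^{-n} ξ_n^{-1} θ(ξ_n^{-1}(⟨z_n*, y⟩ - γ_n)), where θ : ℝ → [0,∞) is a nondecreasing convex function with θ(s)=0 iff s ≤ 0 and θ(s) ≤ s + 1 for all s. Then φ is well-defined (the series converges), φ is convex, nonnegative, and C = { y ∈ X : φ(y) = 0 }. -/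
set_option maxHeartbeats 1000000


/-- If a closed convex set `C` in a separable Banach space is a countable intersection of
half-spaces `{u : ⟨zₙ*, u⟩ ≤ γₙ}`, and `θ : ℝ → [0,∞)` is nondecreasing, convex, vanishes
exactly on `(-∞,0]` and satisfies `θ s ≤ s + 1`, then the series
`φ(y) = ∑ₙ 2⁻ⁿ ξₙ⁻¹ θ(ξₙ⁻¹(⟨zₙ*, y⟩ - γₙ))` with `ξₙ = 1 + ‖zₙ*‖ + |γₙ|`
converges, `φ` is convex and nonnegative, and `C = {y : φ y = 0}`. -/
theorem stmt5 {X : Type*} [NormedAddCommGroup X] [NormedSpace ℝ X] [CompleteSpace X]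
    [TopologicalSpace.SeparableSpace X]
    (C : Set X) (hCclosed : IsClosed C) (hCconv : Convex ℝ C)
    (z : ℕ → X →L[ℝ] ℝ) (γ : ℕ → ℝ)
    (hC : C = ⋂ n : ℕ, {u : X | z n u ≤ γ n})
    (θ : ℝ → ℝ)
    (hθnonneg : ∀ s : ℝ, 0 ≤ θ s)
    (hθmono : Monotone θ) (hθconv : ConvexOn ℝ Set.univ θ)
    (hθzero : ∀ s : ℝ, θ s = 0 ↔ s ≤ 0)
    (hθgrowth : ∀ s : ℝ, θ s ≤ s + 1)
    (ξ : ℕ → ℝ) (hξ : ∀ n, ξ n = 1 + ‖z n‖ + |γ n|)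
    (φ : X → ℝ)
    (hφ : φ = fun y => ∑' n : ℕ, ((1 : ℝ) / 2) ^ n * (ξ n)⁻¹ * θ ((ξ n)⁻¹ * (z n y - γ n))) :
    (∀ y : X,
        Summable (fun n : ℕ => ((1 : ℝ) / 2) ^ n * (ξ n)⁻¹ * θ ((ξ n)⁻¹ * (z n y - γ n)))) ∧
    ConvexOn ℝ Set.univ φ ∧ (∀ y : X, 0 ≤ φ y) ∧ C = {y : X | φ y = 0} := by
  have hξ1 : ∀ n, (1 : ℝ) ≤ ξ n := by
    intro n; rw [hξ n]
    have := norm_nonneg (z n); have := abs_nonneg (γ n); linarith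
  have hξpos : ∀ n, (0 : ℝ) < ξ n := fun n => lt_of_lt_of_le one_pos (hξ1 n)
  have hinvpos : ∀ n, (0 : ℝ) < (ξ n)⁻¹ := fun n => inv_pos.mpr (hξpos n)
  have hinvle : ∀ n, (ξ n)⁻¹ ≤ 1 := fun n => inv_le_one_of_one_le₀ (hξ1 n)
  have hterm_nonneg : ∀ (y : X) (n : ℕ),
      0 ≤ ((1 : ℝ) / 2) ^ n * (ξ n)⁻¹ * θ ((ξ n)⁻¹ * (z n y - γ n)) := by
    intro y n
    exact mul_nonneg (mul_nonneg (by positivity) (hinvpos n).le) (hθnonneg _)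
  have hsum : ∀ y : X,
      Summable (fun n : ℕ => ((1 : ℝ) / 2) ^ n * (ξ n)⁻¹ * θ ((ξ n)⁻¹ * (z n y - γ n))) := by
    intro y
    refine Summable.of_nonneg_of_le (hterm_nonneg y) ?_
      ((summable_geometric_of_lt_one (r := (1:ℝ)/2) (by norm_num) (by norm_num)).mul_right (‖y‖ + 2))
    intro n
    · have hz : z n y - γ n ≤ ‖z n‖ * ‖y‖ + |γ n| := by
        have h1 : z n y ≤ |z n y| := le_abs_self _
        have h2 : |z n y| ≤ ‖z n‖ * ‖y‖ := (z n).le_opNorm y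
        have h3 : -γ n ≤ |γ n| := neg_le_abs _
        linarith
      have hθb : θ ((ξ n)⁻¹ * (z n y - γ n)) ≤ ‖y‖ + 2 := by
        refine (hθgrowth _).trans ?_
        have hb : (ξ n)⁻¹ * (z n y - γ n) ≤ (ξ n)⁻¹ * (‖z n‖ * ‖y‖ + |γ n|) :=
          mul_le_mul_of_nonneg_left hz (hinvpos n).le
        have hzb : (ξ n)⁻¹ * ‖z n‖ ≤ 1 := by
          rw [inv_mul_le_iff₀ (hξpos n), hξ n, mul_one]
          have := abs_nonneg (γ n); linarith
        have hgb : (ξ n)⁻¹ * |γ n| ≤ 1 := by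
          rw [inv_mul_le_iff₀ (hξpos n), hξ n, mul_one]
          have := norm_nonneg (z n); linarith
        have : (ξ n)⁻¹ * (‖z n‖ * ‖y‖ + |γ n|)
            = ((ξ n)⁻¹ * ‖z n‖) * ‖y‖ + (ξ n)⁻¹ * |γ n| := by ring
        nlinarith [norm_nonneg y]
      calc ((1 : ℝ) / 2) ^ n * (ξ n)⁻¹ * θ ((ξ n)⁻¹ * (z n y - γ n))
          ≤ ((1 : ℝ) / 2) ^ n * 1 * (‖y‖ + 2) := by
            apply mul_le_mul (mul_le_mul_of_nonneg_left (hinvle n) (by positivity)) hθb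
              (hθnonneg _) (by positivity)
        _ = ((1 : ℝ) / 2) ^ n * (‖y‖ + 2) := by ring
  refine ⟨hsum, ?_, ?_, ?_⟩
  · refine ⟨convex_univ, ?_⟩
    intro x _ y _ a b ha hb hab
    rw [hφ]
    simp only
    have hab' : ∀ n : ℕ, ((1 : ℝ) / 2) ^ n * (ξ n)⁻¹ * θ ((ξ n)⁻¹ * (z n (a • x + b • y) - γ n))
        ≤ a * (((1 : ℝ) / 2) ^ n * (ξ n)⁻¹ * θ ((ξ n)⁻¹ * (z n x - γ n)))
          + b * (((1 : ℝ) / 2) ^ n * (ξ n)⁻¹ * θ ((ξ n)⁻¹ * (z n y - γ n))) := by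
      intro n
      have harg : (ξ n)⁻¹ * (z n (a • x + b • y) - γ n)
          = a • ((ξ n)⁻¹ * (z n x - γ n)) + b • ((ξ n)⁻¹ * (z n y - γ n)) := by
        simp only [map_add, map_smul, smul_eq_mul]
        have h0 : γ n = a * γ n + b * γ n := by rw [← add_mul, hab, one_mul]
        linear_combination (-(ξ n)⁻¹) * h0
      have hcv := hθconv.2 (Set.mem_univ ((ξ n)⁻¹ * (z n x - γ n)))
        (Set.mem_univ ((ξ n)⁻¹ * (z n y - γ n))) ha hb hab
      rw [harg]
      have hc : (0 : ℝ) ≤ ((1 : ℝ) / 2) ^ n * (ξ n)⁻¹ :=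
        mul_nonneg (by positivity) (hinvpos n).le
      calc ((1 : ℝ) / 2) ^ n * (ξ n)⁻¹
            * θ (a • ((ξ n)⁻¹ * (z n x - γ n)) + b • ((ξ n)⁻¹ * (z n y - γ n)))
          ≤ ((1 : ℝ) / 2) ^ n * (ξ n)⁻¹
            * (a • θ ((ξ n)⁻¹ * (z n x - γ n)) + b • θ ((ξ n)⁻¹ * (z n y - γ n))) :=
            mul_le_mul_of_nonneg_left hcv hc
        _ = a * (((1 : ℝ) / 2) ^ n * (ξ n)⁻¹ * θ ((ξ n)⁻¹ * (z n x - γ n)))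
          + b * (((1 : ℝ) / 2) ^ n * (ξ n)⁻¹ * θ ((ξ n)⁻¹ * (z n y - γ n))) := by
            simp only [smul_eq_mul]; ring
    have hsRHS : Summable (fun n : ℕ =>
        a * (((1 : ℝ) / 2) ^ n * (ξ n)⁻¹ * θ ((ξ n)⁻¹ * (z n x - γ n)))
        + b * (((1 : ℝ) / 2) ^ n * (ξ n)⁻¹ * θ ((ξ n)⁻¹ * (z n y - γ n)))) :=
      ((hsum x).mul_left a).add ((hsum y).mul_left b)
    calc (∑' n : ℕ, ((1 : ℝ) / 2) ^ n * (ξ n)⁻¹ * θ ((ξ n)⁻¹ * (z n (a • x + b • y) - γ n)))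
        ≤ ∑' n : ℕ, (a * (((1 : ℝ) / 2) ^ n * (ξ n)⁻¹ * θ ((ξ n)⁻¹ * (z n x - γ n)))
          + b * (((1 : ℝ) / 2) ^ n * (ξ n)⁻¹ * θ ((ξ n)⁻¹ * (z n y - γ n)))) :=
          Summable.tsum_le_tsum hab' (hsum _) hsRHS
      _ = a • (∑' n : ℕ, ((1 : ℝ) / 2) ^ n * (ξ n)⁻¹ * θ ((ξ n)⁻¹ * (z n x - γ n)))
          + b • (∑' n : ℕ, ((1 : ℝ) / 2) ^ n * (ξ n)⁻¹ * θ ((ξ n)⁻¹ * (z n y - γ n))) := by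
          rw [Summable.tsum_add ((hsum x).mul_left a) ((hsum y).mul_left b),
            tsum_mul_left, tsum_mul_left]
          simp [smul_eq_mul]
  · intro y
    rw [hφ]
    exact tsum_nonneg (hterm_nonneg y)
  · ext y
    simp only [hC, Set.mem_iInter, Set.mem_setOf_eq, hφ]
    constructor
    · intro h
      have hz : ∀ n : ℕ, ((1 : ℝ) / 2) ^ n * (ξ n)⁻¹ * θ ((ξ n)⁻¹ * (z n y - γ n)) = 0 := by
        intro n
        have : θ ((ξ n)⁻¹ * (z n y - γ n)) = 0 := by
          rw [hθzero]
          exact mul_nonpos_of_nonneg_of_nonpos (hinvpos n).le (sub_nonpos.mpr (h n))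
        rw [this, mul_zero]
      rw [tsum_congr hz]
      exact tsum_zero
    · intro h n
      by_contra hlt
      push_neg at hlt
      have hpos : 0 < θ ((ξ n)⁻¹ * (z n y - γ n)) := by
        rcases lt_or_eq_of_le (hθnonneg _) with h' | h'
        · exact h'
        · exfalso
          have := (hθzero _).mp h'.symm
          have : z n y - γ n ≤ 0 := by
            by_contra hc
            push_neg at hc
            nlinarith [hinvpos n]
          linarith
      have htpos : 0 < ((1 : ℝ) / 2) ^ n * (ξ n)⁻¹ * θ ((ξ n)⁻¹ * (z n y - γ n)) :=
        mul_pos (mul_pos (by positivity) (hinvpos n)) hpos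
      have := Summable.tsum_pos (hsum y) (hterm_nonneg y) n htpos
      linarith
end

section
/- Let H be a Hilbert space, θ : ℝ → ℝ be a convex, nondecreasing, L-Lipschitz function, x* ∈ H and β ∈ ℝ. Then the function x ↦ θ(⟨x*, x⟩ - (1/2)‖x‖² - β) + (L/2)‖x‖² is convex on H. -/
open scoped RealInnerProductSpace

lemma lip_shift (θ : ℝ → ℝ) (L : NNReal) (hθlip : LipschitzWith L θ)
    (u c : ℝ) (hc : 0 ≤ c) : θ (u + c) ≤ θ u + (L : ℝ) * c := by
  have := hθlip.dist_le_mul (u + c) u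
  rw [Real.dist_eq, Real.dist_eq] at this
  have h1 : |θ (u + c) - θ u| ≤ L * c := by
    simpa [abs_of_nonneg hc] using this
  linarith [abs_le.mp h1 |>.2]

/-- If `θ : ℝ → ℝ` is convex, nondecreasing and `L`-Lipschitz, `x* ∈ H`, `β ∈ ℝ`, then
`x ↦ θ(⟨x*, x⟩ - (1/2)‖x‖² - β) + (L/2)‖x‖²` is convex on the Hilbert space `H`. -/
theorem stmt7 {H : Type*} [NormedAddCommGroup H] [InnerProductSpace ℝ H] [CompleteSpace H]
    (θ : ℝ → ℝ) (L : NNReal)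
    (hθconv : ConvexOn ℝ Set.univ θ) (hθmono : Monotone θ)
    (hθlip : LipschitzWith L θ)
    (xs : H) (β : ℝ) :
    ConvexOn ℝ Set.univ
      (fun x : H => θ (⟪xs, x⟫ - (1 / 2) * ‖x‖ ^ 2 - β) + ((L : ℝ) / 2) * ‖x‖ ^ 2) := by
  refine ⟨convex_univ, ?_⟩
  intro x _ y _ a b ha hb hab
  set z := a • x + b • y with hz
  have hinner : ⟪xs, z⟫ = a * ⟪xs, x⟫ + b * ⟪xs, y⟫ := by
    simp [hz, inner_add_right, inner_smul_right]
  have hnormz : ‖z‖ ^ 2 = a * ‖x‖ ^ 2 + b * ‖y‖ ^ 2 - a * b * ‖x - y‖ ^ 2 := by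
    have h1 : ‖z‖ ^ 2 = ⟪z, z⟫ := (real_inner_self_eq_norm_sq z).symm
    have h2 : ‖x - y‖ ^ 2 = ⟪x - y, x - y⟫ := (real_inner_self_eq_norm_sq _).symm
    have hx : ‖x‖ ^ 2 = ⟪x, x⟫ := (real_inner_self_eq_norm_sq x).symm
    have hy : ‖y‖ ^ 2 = ⟪y, y⟫ := (real_inner_self_eq_norm_sq y).symm
    rw [h1, h2, hx, hy]
    simp only [hz, inner_add_add_self, inner_smul_left, inner_smul_right, inner_sub_sub_self,
      RCLike.star_def, map_mul, conj_trivial]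
    linear_combination (a * (inner ℝ x x : ℝ) + b * inner ℝ y y) * hab
  set gx := ⟪xs, x⟫ - (1 / 2) * ‖x‖ ^ 2 - β with hgx
  set gy := ⟪xs, y⟫ - (1 / 2) * ‖y‖ ^ 2 - β with hgy
  have hgz : ⟪xs, z⟫ - (1 / 2) * ‖z‖ ^ 2 - β
      = (a * gx + b * gy) + (a * b / 2) * ‖x - y‖ ^ 2 := by
    rw [hinner, hnormz, hgx, hgy]; linear_combination β * hab
  have hc : 0 ≤ (a * b / 2) * ‖x - y‖ ^ 2 := by positivity
  have step1 : θ (⟪xs, z⟫ - (1 / 2) * ‖z‖ ^ 2 - β)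
      ≤ θ (a * gx + b * gy) + (L : ℝ) * ((a * b / 2) * ‖x - y‖ ^ 2) := by
    rw [hgz]; exact lip_shift θ L hθlip _ _ hc
  have step2 : θ (a * gx + b * gy) ≤ a * θ gx + b * θ gy := by
    have := hθconv.2 (Set.mem_univ gx) (Set.mem_univ gy) ha hb hab
    simpa [smul_eq_mul] using this
  have hquad : ((L : ℝ) / 2) * ‖z‖ ^ 2
      = a * (((L : ℝ) / 2) * ‖x‖ ^ 2) + b * (((L : ℝ) / 2) * ‖y‖ ^ 2)
        - (L : ℝ) * ((a * b / 2) * ‖x - y‖ ^ 2) := by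
    rw [hnormz]; ring
  simp only [smul_eq_mul]
  rw [hquad]
  linarith
end

section
/- Define M : ℝ ⇉ ℝ² by M(t) = t(1,0) + C where C = { (x,y) ∈ ℝ² : xy ≥ 1, x ≥ 0 }. Then M is pseudo-norm-weak upper semicontinuous at every point, but M is not upper semicontinuous (in the standard sense) at t = 0. -/
/-- The multifunction `M(t) = t(1,0) + C` with `C = {(x,y) : xy ≥ 1, x ≥ 0}` is
pseudo-norm-weak upper semicontinuous at every point, but not upper semicontinuous in the
standard sense at `t = 0`. -/
theorem stmt11
    (C : Set (ℝ × ℝ)) (hC : C = {p : ℝ × ℝ | 1 ≤ p.1 * p.2 ∧ 0 ≤ p.1})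
    (M : ℝ → Set (ℝ × ℝ)) (hM : M = fun t => (fun p : ℝ × ℝ => ((t, 0) : ℝ × ℝ) + p) '' C) :
    (∀ (t : ℝ) (y' : (ℝ × ℝ) →L[ℝ] ℝ) (α : ℝ),
        (∀ u ∈ M t, y' u < α) → ∀ η > (0 : ℝ), ∃ ε > (0 : ℝ),
          ∀ t' : ℝ, |t' - t| < ε → ∀ u ∈ M t', y' u < α + η) ∧
    ¬ (∀ O : Set (ℝ × ℝ), IsOpen O → M 0 ⊆ O → ∃ ε > (0 : ℝ),
          ∀ t' : ℝ, |t'| < ε → M t' ⊆ O) := by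
  constructor
  · intro t y' α hα η hη
    set a := y' ((1 : ℝ), (0 : ℝ)) with ha
    have hab : (0:ℝ) < |a| + 1 := by positivity
    refine ⟨η / (|a| + 1), by positivity, ?_⟩
    intro t' ht' u hu
    rw [hM] at hu
    obtain ⟨p, hp, rfl⟩ := hu
    have h1 : ((t, 0) : ℝ × ℝ) + p ∈ M t := by
      rw [hM]; exact ⟨p, hp, rfl⟩
    have h2 := hα _ h1
    have key : ((t', 0) : ℝ × ℝ) + p = (((t, 0) : ℝ × ℝ) + p) + (t' - t) • ((1 : ℝ), (0 : ℝ)) := by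
      simp [Prod.ext_iff]; ring
    show y' (((t', 0) : ℝ × ℝ) + p) < α + η
    rw [key, map_add, map_smul, smul_eq_mul, ← ha]
    have hb1 : (t' - t) * a ≤ |t' - t| * |a| := by
      calc (t' - t) * a ≤ |(t' - t) * a| := le_abs_self _
        _ = |t' - t| * |a| := abs_mul _ _
    have hb2 : |t' - t| * |a| < η := by
      have h3 : |t' - t| * |a| ≤ (η / (|a| + 1)) * |a| :=
        mul_le_mul_of_nonneg_right (le_of_lt ht') (abs_nonneg _)
      have h4 : (η / (|a| + 1)) * |a| < η := by
        rw [div_mul_eq_mul_div, div_lt_iff₀ hab]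
        nlinarith [abs_nonneg a]
      linarith
    linarith
  · intro h
    have hsub : M 0 ⊆ {p : ℝ × ℝ | 0 < p.1} := by
      intro u hu
      rw [hM] at hu
      obtain ⟨p, hp, rfl⟩ := hu
      rw [hC] at hp
      obtain ⟨hp1, hp2⟩ := hp
      simp only [Set.mem_setOf_eq, Prod.fst_add]
      have : 0 < p.1 := by
        rcases hp2.lt_or_eq with hlt | heq
        · exact hlt
        · exfalso; rw [← heq] at hp1; simp at hp1; linarith
      simpa using this
    obtain ⟨ε, hε, hmem⟩ := h {p : ℝ × ℝ | 0 < p.1}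
      (isOpen_lt continuous_const continuous_fst) hsub
    have ht' : |(-(ε/2) : ℝ)| < ε := by
      rw [abs_neg, abs_of_pos (by positivity)]; linarith
    have hu : ((-(ε/2), 0) : ℝ × ℝ) + (ε/4, 4/ε) ∈ M (-(ε/2)) := by
      rw [hM]
      refine ⟨(ε/4, 4/ε), ?_, rfl⟩
      rw [hC]
      constructor
      · have : (ε/4) * (4/ε) = 1 := by field_simp
        simp [this]
      · positivity
    have := hmem _ ht' hu
    simp only [Set.mem_setOf_eq, Prod.fst_add] at this
    linarith
end

section
/- Let X, Y be Banach spaces and f : X × Y → ℝ with f(x, ·) convex for each x, and define f*(x, y*) := sup_{y ∈ Y} (⟨y*, y⟩ - f(x,y)). If f is uniformly continuous on X × Y, then for every y* ∈ Y*, the map x ↦ f*(x, y*) is upper semicontinuous (taking values in ℝ ∪ {+∞}). -/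
/-- If `f : X × Y → ℝ` is uniformly continuous and `f(x, ·)` is convex for each `x`, then
for every `y* ∈ Y*` the partial Fenchel conjugate `x ↦ f*(x, y*) = sup_y (⟨y*,y⟩ - f(x,y))`
(with values in `ℝ ∪ {+∞}`) is upper semicontinuous. -/
theorem stmt12 {X Y : Type*} [NormedAddCommGroup X] [NormedSpace ℝ X] [CompleteSpace X]
    [NormedAddCommGroup Y] [NormedSpace ℝ Y] [CompleteSpace Y]
    (f : X × Y → ℝ)
    (hconv : ∀ x : X, ConvexOn ℝ Set.univ (fun y : Y => f (x, y)))
    (hunif : UniformContinuous f) :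
    ∀ y' : Y →L[ℝ] ℝ,
      UpperSemicontinuous (fun x : X => ⨆ y : Y, ((y' y - f (x, y) : ℝ) : EReal)) := by
  intro y' x c hc
  set g : X → EReal := fun x => ⨆ y : Y, ((y' y - f (x, y) : ℝ) : EReal) with hg
  have hbot : g x ≠ ⊥ :=
    ne_bot_of_le_ne_bot (EReal.coe_ne_bot _)
      (le_iSup (fun y : Y => ((y' y - f (x, y) : ℝ) : EReal)) 0)
  have htop : g x ≠ ⊤ := hc.ne_top
  set r := (g x).toReal with hrdef
  have hr : (r : EReal) = g x := EReal.coe_toReal htop hbot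
  obtain ⟨ε, hε, hlt⟩ : ∃ ε : ℝ, 0 < ε ∧ ((r + ε : ℝ) : EReal) < c := by
    rcases eq_or_ne c ⊤ with h | h
    · exact ⟨1, one_pos, h ▸ EReal.coe_lt_top _⟩
    · have hcb : c ≠ ⊥ := fun hb => by simp [hb] at hc
      set s := c.toReal with hs
      have hsc : (s : EReal) = c := EReal.coe_toReal h hcb
      have hrs : r < s := by
        rw [← EReal.coe_lt_coe_iff, hr, hsc]; exact hc
      refine ⟨(s - r)/2, by linarith, ?_⟩
      rw [← hsc, EReal.coe_lt_coe_iff]; linarith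
  obtain ⟨δ, hδ, hδ'⟩ := Metric.uniformContinuous_iff.mp hunif ε hε
  rw [Metric.eventually_nhds_iff]
  refine ⟨δ, hδ, fun x' hx' => ?_⟩
  have hgle : g x' ≤ ((r + ε : ℝ) : EReal) := by
    refine iSup_le fun y => ?_
    have h1 : dist (f (x', y)) (f (x, y)) < ε := by
      apply hδ'
      rw [Prod.dist_eq]
      simp only [dist_self]
      exact max_lt hx' hδ
    have h2 : (↑(y' y - f (x, y)) : EReal) ≤ g x :=
      le_iSup (fun y : Y => ((y' y - f (x, y) : ℝ) : EReal)) y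
    have h3 : y' y - f (x, y) ≤ r := by
      rw [← EReal.coe_le_coe_iff]; exact h2.trans_eq hr.symm
    rw [EReal.coe_le_coe_iff]
    have h4 := (abs_lt.mp (by rwa [Real.dist_eq] at h1)).1
    linarith
  exact lt_of_le_of_lt hgle hlt
end

section
/- Let X be a reflexive Banach space and f : H × X → ℝ (H a Hilbert space) such that: (i) f is sequentially lower semicontinuous with respect to strong convergence in H and weak convergence in X; (ii) for each x ∈ H there exist δ > 0, α > 0, β ∈ ℝ with f(x', y) ≥ α‖y‖² + β for all x' ∈ B_δ(x) and y ∈ X. Then for every y* ∈ X*, the map x ↦ f*(x, y*) := sup_y (⟨y*,y⟩ - f(x,y)) is finite-valued and upper semicontinuous on H. -/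
open Filter

/-- Let `X` be a reflexive (separable) Banach space — encoded via the Eberlein–Šmulian
property that every bounded sequence has a weakly convergent subsequence — and
`f : H × X → ℝ` (H a Hilbert space) such that (i) `f` is sequentially lsc for strong
convergence in `H` and weak convergence in `X`, and (ii) `f` is locally uniformly
quadratically coercive in the second variable. Then for every `y* ∈ X*` the partial
conjugate `x ↦ f*(x, y*)` is finite-valued and upper semicontinuous on `H`. -/
theorem stmt13 {H : Type*} [NormedAddCommGroup H] [InnerProductSpace ℝ H] [CompleteSpace H]
    {X : Type*} [NormedAddCommGroup X] [NormedSpace ℝ X] [CompleteSpace X]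
    [TopologicalSpace.SeparableSpace X]
    (hrefl : ∀ y : ℕ → X, (∃ c : ℝ, ∀ n, ‖y n‖ ≤ c) →
      ∃ (y₀ : X) (σ : ℕ → ℕ), StrictMono σ ∧
        ∀ g : X →L[ℝ] ℝ, Tendsto (fun n => g (y (σ n))) atTop (nhds (g y₀)))
    (f : H × X → ℝ)
    (hlsc : ∀ (x : ℕ → H) (x₀ : H) (y : ℕ → X) (y₀ : X),
      Tendsto x atTop (nhds x₀) →
      (∀ g : X →L[ℝ] ℝ, Tendsto (fun n => g (y n)) atTop (nhds (g y₀))) →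
      f (x₀, y₀) ≤ liminf (fun n => f (x n, y n)) atTop)
    (hcoer : ∀ x : H, ∃ δ > (0 : ℝ), ∃ α > (0 : ℝ), ∃ β : ℝ,
      ∀ x' ∈ Metric.ball x δ, ∀ y : X, α * ‖y‖ ^ 2 + β ≤ f (x', y)) :
    ∀ y' : X →L[ℝ] ℝ,
      (∀ x : H, (⨆ y : X, ((y' y - f (x, y) : ℝ) : EReal)) < ⊤) ∧
      UpperSemicontinuous (fun x : H => ⨆ y : X, ((y' y - f (x, y) : ℝ) : EReal)) := by
  intro y'
  have hyle : ∀ y : X, y' y ≤ ‖y'‖ * ‖y‖ := fun y =>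
    (le_abs_self _).trans (by rw [← Real.norm_eq_abs]; exact y'.le_opNorm y)
  have hfin : ∀ x : H, (⨆ y : X, ((y' y - f (x, y) : ℝ) : EReal)) < ⊤ := by
    intro x
    obtain ⟨δ, hδ, α, hα, β, hcb⟩ := hcoer x
    refine lt_of_le_of_lt (iSup_le fun y => ?_)
      (EReal.coe_lt_top (‖y'‖ ^ 2 / (4 * α) - β))
    have h1 : α * ‖y‖ ^ 2 + β ≤ f (x, y) := hcb x (Metric.mem_ball_self hδ) y
    have h2 := hyle y
    have key : y' y - f (x, y) ≤ ‖y'‖ ^ 2 / (4 * α) - β := by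
      have h5 : y' y - f (x, y) ≤ ‖y'‖ * ‖y‖ - α * ‖y‖ ^ 2 - β := by linarith
      have h6 : ‖y'‖ * ‖y‖ - α * ‖y‖ ^ 2 ≤ ‖y'‖ ^ 2 / (4 * α) := by
        rw [le_div_iff₀ (by linarith : (0 : ℝ) < 4 * α)]
        nlinarith [sq_nonneg (2 * α * ‖y‖ - ‖y'‖)]
      linarith
    exact_mod_cast key
  refine ⟨hfin, fun x₀ => ?_⟩
  intro b hb
  by_contra hcon
  rw [Filter.not_eventually] at hcon
  obtain ⟨x, hxt, hxb⟩ := Filter.exists_seq_forall_of_frequently hcon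
  simp only [not_lt] at hxb
  -- pick a real b' between F x₀ and b
  obtain ⟨b', hb'1, hb'2⟩ := EReal.exists_between_coe_real hb
  obtain ⟨δ, hδ, α, hα, β, hcb⟩ := hcoer x₀
  -- shift the sequence so that it lives in the ball
  obtain ⟨N, hN⟩ := (Metric.tendsto_nhds.1 hxt δ hδ).exists_forall_of_atTop
  set x' : ℕ → H := fun n => x (n + N) with hx'
  have hx't : Tendsto x' atTop (nhds x₀) := hxt.comp (tendsto_add_atTop_nat N)
  have hx'ball : ∀ n, x' n ∈ Metric.ball x₀ δ := by
    intro n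
    exact Metric.mem_ball.2 (hN (n + N) (Nat.le_add_left N n))
  -- choose near-optimal y n
  have hy : ∀ n : ℕ, ∃ y : X, b' < y' y - f (x' n, y) := by
    intro n
    have : (b' : EReal) < ⨆ y : X, ((y' y - f (x' n, y) : ℝ) : EReal) :=
      lt_of_lt_of_le hb'2 (hxb (n + N))
    obtain ⟨y, hy⟩ := lt_iSup_iff.1 this
    exact ⟨y, by exact_mod_cast hy⟩
  choose y hy using hy
  -- bound on ‖y n‖
  set D : ℝ := -β - b' with hD
  have hybd : ∀ n, ‖y n‖ ≤ max 1 ((‖y'‖ + |D|) / α) := by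
    intro n
    have h1 : α * ‖y n‖ ^ 2 + β ≤ f (x' n, y n) := hcb (x' n) (hx'ball n) (y n)
    have h2 := hyle (y n)
    have h3 := hy n
    have key : α * ‖y n‖ ^ 2 ≤ ‖y'‖ * ‖y n‖ + D := by simp only [hD]; linarith
    rcases le_or_gt ‖y n‖ 1 with h | h
    · exact h.trans (le_max_left _ _)
    · refine le_max_of_le_right ?_
      rw [le_div_iff₀ hα]
      nlinarith [le_abs_self D, abs_nonneg D, norm_nonneg y']
  -- weakly convergent subsequence
  obtain ⟨y₀, σ, hσ, hw⟩ := hrefl y ⟨_, hybd⟩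
  have hx'σ : Tendsto (fun n => x' (σ n)) atTop (nhds x₀) :=
    hx't.comp hσ.tendsto_atTop
  have hls := hlsc (fun n => x' (σ n)) x₀ (fun n => y (σ n)) y₀ hx'σ hw
  -- liminf comparison
  have huv : ∀ n, f (x' (σ n), y (σ n)) ≤ y' (y (σ n)) - b' := fun n =>
    by linarith [hy (σ n)]
  have hvt : Tendsto (fun n => y' (y (σ n)) - b') atTop (nhds (y' y₀ - b')) :=
    (hw y').sub_const b'
  have hubdd : IsBoundedUnder (· ≥ ·) atTop (fun n => f (x' (σ n), y (σ n))) :=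
    Filter.isBoundedUnder_of ⟨β, fun n => by
      have h1 := hcb (x' (σ n)) (hx'ball (σ n)) (y (σ n))
      nlinarith [sq_nonneg ‖y (σ n)‖]⟩
  have hll : liminf (fun n => f (x' (σ n), y (σ n))) atTop
      ≤ liminf (fun n => y' (y (σ n)) - b') atTop :=
    liminf_le_liminf (Eventually.of_forall huv)
      hubdd hvt.isBoundedUnder_le.isCoboundedUnder_ge
  have hfinal : f (x₀, y₀) ≤ y' y₀ - b' := by
    refine hls.trans (hll.trans ?_)
    exact le_of_eq hvt.liminf_eq
  have : (b' : EReal) ≤ ⨆ y : X, ((y' y - f (x₀, y) : ℝ) : EReal) := by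
    refine le_trans ?_ (le_iSup (fun y => ((y' y - f (x₀, y) : ℝ) : EReal)) y₀)
    exact_mod_cast (by linarith : b' ≤ y' y₀ - f (x₀, y₀))
  exact absurd (lt_of_le_of_lt this hb'1) (lt_irrefl _)
end

section
/- Let X be a finite-dimensional normed space and define, for nonempty closed sets A, B ⊆ X, d_ρ(A,B) := max_{‖x‖ ≤ ρ} |dist(x,A) - dist(x,B)| and d̄(A,B) := ∫₀^∞ e^{-ρ} d_ρ(A,B) dρ. Then d̄ is a metric on the collection of nonempty closed subsets of X, and a sequence of nonempty closed sets (A_k) converges to a nonempty closed set A in the Painlevé–Kuratowski sense if and only if d̄(A_k, A) → 0. -/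
open Filter Metric Set MeasureTheory Real

set_option linter.unusedSectionVars false

/-- `d_ρ(A,B) = max_{‖x‖ ≤ ρ} |dist(x,A) - dist(x,B)|`. -/
noncomputable def setDistRho {X : Type*} [NormedAddCommGroup X]
    (ρ : ℝ) (A B : Set X) : ℝ :=
  ⨆ x : Metric.closedBall (0 : X) ρ,
    |Metric.infDist (x : X) A - Metric.infDist (x : X) B|

/-- The integrated set distance `d̄(A,B) = ∫₀^∞ e^{-ρ} d_ρ(A,B) dρ`. -/
noncomputable def intSetDist {X : Type*} [NormedAddCommGroup X] (A B : Set X) : ℝ :=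
  ∫ ρ in Set.Ioi (0 : ℝ), Real.exp (-ρ) * setDistRho ρ A B

section Aux

variable {X : Type*} [NormedAddCommGroup X]

variable {X : Type*} [NormedAddCommGroup X]

lemma infDist_abs_sub_le (A : Set X) (x y : X) :
    |Metric.infDist x A - Metric.infDist y A| ≤ dist x y := by
  have := (Metric.lipschitz_infDist_pt A).dist_le_mul x y
  simpa [Real.dist_eq] using this

lemma key_bound (A B : Set X) {x : X} {ρ : ℝ} (hx : x ∈ Metric.closedBall (0:X) ρ) :
    |Metric.infDist x A - Metric.infDist x B| ≤
      |Metric.infDist (0:X) A - Metric.infDist (0:X) B| + 2 * ρ := by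
  have h1 := infDist_abs_sub_le A x 0
  have h2 := infDist_abs_sub_le B x 0
  have hxρ : dist x 0 ≤ ρ := by simpa [Metric.mem_closedBall] using hx
  have : |Metric.infDist x A - Metric.infDist x B|
      ≤ |Metric.infDist (0:X) A - Metric.infDist (0:X) B| + (dist x 0 + dist x 0) := by
    have := abs_sub_abs_le_abs_sub (Metric.infDist x A - Metric.infDist x B)
      (Metric.infDist (0:X) A - Metric.infDist (0:X) B)
    -- direct approach
    have habs : |(Metric.infDist x A - Metric.infDist x B) -
        (Metric.infDist (0:X) A - Metric.infDist (0:X) B)| ≤ dist x 0 + dist x 0 := by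
      calc |(Metric.infDist x A - Metric.infDist x B) -
          (Metric.infDist (0:X) A - Metric.infDist (0:X) B)|
          = |(Metric.infDist x A - Metric.infDist (0:X) A) -
            (Metric.infDist x B - Metric.infDist (0:X) B)| := by ring_nf
        _ ≤ |Metric.infDist x A - Metric.infDist (0:X) A| +
            |Metric.infDist x B - Metric.infDist (0:X) B| := abs_sub _ _
        _ ≤ dist x 0 + dist x 0 := add_le_add h1 h2
    calc |Metric.infDist x A - Metric.infDist x B|
        ≤ |Metric.infDist (0:X) A - Metric.infDist (0:X) B| +
          |(Metric.infDist x A - Metric.infDist x B) -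
            (Metric.infDist (0:X) A - Metric.infDist (0:X) B)| := by
          have := abs_add_le (Metric.infDist (0:X) A - Metric.infDist (0:X) B)
            ((Metric.infDist x A - Metric.infDist x B) -
              (Metric.infDist (0:X) A - Metric.infDist (0:X) B))
          simpa using this
      _ ≤ _ := by linarith
  linarith

lemma srho_bddAbove (A B : Set X) (ρ : ℝ) :
    BddAbove (Set.range fun x : Metric.closedBall (0:X) ρ =>
      |Metric.infDist (x:X) A - Metric.infDist (x:X) B|) := by
  refine ⟨|Metric.infDist (0:X) A - Metric.infDist (0:X) B| + 2 * ρ, ?_⟩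
  rintro _ ⟨x, rfl⟩
  exact key_bound A B x.2

lemma srho_nonneg (A B : Set X) (ρ : ℝ) : 0 ≤ setDistRho ρ A B := by
  unfold setDistRho
  exact Real.iSup_nonneg fun x => abs_nonneg _

lemma abs_le_srho (A B : Set X) {ρ : ℝ} {x : X} (hx : x ∈ Metric.closedBall (0:X) ρ) :
    |Metric.infDist x A - Metric.infDist x B| ≤ setDistRho ρ A B :=
  le_ciSup (srho_bddAbove A B ρ) (⟨x, hx⟩ : Metric.closedBall (0:X) ρ)

lemma srho_le (A B : Set X) {ρ a : ℝ} (ha : 0 ≤ a)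
    (h : ∀ x : X, x ∈ Metric.closedBall (0:X) ρ →
      |Metric.infDist x A - Metric.infDist x B| ≤ a) : setDistRho ρ A B ≤ a :=
  Real.iSup_le (fun x => h x x.2) ha

lemma srho_mono (A B : Set X) : Monotone fun ρ => setDistRho ρ A B := by
  intro ρ ρ' h
  exact srho_le A B (srho_nonneg A B ρ') fun x hx =>
    abs_le_srho A B (Metric.closedBall_subset_closedBall h hx)

lemma srho_symm (A B : Set X) (ρ : ℝ) : setDistRho ρ A B = setDistRho ρ B A := by
  unfold setDistRho
  congr 1; ext x; rw [abs_sub_comm]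

lemma srho_triangle (A B C : Set X) (ρ : ℝ) :
    setDistRho ρ A C ≤ setDistRho ρ A B + setDistRho ρ B C := by
  refine srho_le A C (add_nonneg (srho_nonneg A B ρ) (srho_nonneg B C ρ)) fun x hx => ?_
  calc |Metric.infDist x A - Metric.infDist x C|
      ≤ |Metric.infDist x A - Metric.infDist x B| +
        |Metric.infDist x B - Metric.infDist x C| := abs_sub_le _ _ _
    _ ≤ _ := add_le_add (abs_le_srho A B hx) (abs_le_srho B C hx)

lemma srho_le_bound (A B : Set X) {ρ : ℝ} :
    setDistRho ρ A B ≤ |Metric.infDist (0:X) A - Metric.infDist (0:X) B| + 2 * max ρ 0 := by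
  refine srho_le A B (by positivity) fun x hx => ?_
  have : x ∈ Metric.closedBall (0:X) (max ρ 0) :=
    Metric.closedBall_subset_closedBall (le_max_left _ _) hx
  exact key_bound A B this

lemma bound_integrable (C : ℝ) :
    IntegrableOn (fun ρ : ℝ => Real.exp (-ρ) * (C + 2 * ρ)) (Set.Ioi (0:ℝ)) := by
  have h1 : IntegrableOn (fun ρ : ℝ => Real.exp (-1 * ρ)) (Set.Ioi (0:ℝ)) :=
    exp_neg_integrableOn_Ioi 0 one_pos
  have h1' : IntegrableOn (fun ρ : ℝ => Real.exp (-ρ)) (Set.Ioi (0:ℝ)) := by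
    simpa using h1
  have h2 : IntegrableOn (fun ρ : ℝ => Real.exp (-ρ) * ρ ^ ((2:ℝ) - 1)) (Set.Ioi (0:ℝ)) :=
    Real.GammaIntegral_convergent (by norm_num)
  have h2' : IntegrableOn (fun ρ : ℝ => Real.exp (-ρ) * ρ) (Set.Ioi (0:ℝ)) := by
    refine h2.congr_fun (fun x hx => ?_) measurableSet_Ioi
    norm_num
  have h3 : IntegrableOn (fun ρ : ℝ => C * Real.exp (-ρ) + 2 * (Real.exp (-ρ) * ρ))
      (Set.Ioi (0:ℝ)) := (h1'.const_mul C).add (h2'.const_mul 2)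
  exact h3.congr_fun (fun x hx => by ring) measurableSet_Ioi

lemma srho_measurable (A B : Set X) :
    Measurable fun ρ : ℝ => setDistRho ρ A B :=
  (srho_mono A B).measurable

lemma intSetDist_integrableOn (A B : Set X) :
    IntegrableOn (fun ρ : ℝ => Real.exp (-ρ) * setDistRho ρ A B) (Set.Ioi (0:ℝ)) := by
  set C := |Metric.infDist (0:X) A - Metric.infDist (0:X) B|
  refine Integrable.mono (bound_integrable C) ?_ ?_
  · exact ((Real.measurable_exp.comp measurable_neg).mul
      (srho_measurable A B)).aestronglyMeasurable
  · refine (ae_restrict_iff' measurableSet_Ioi).2 (Filter.Eventually.of_forall fun ρ hρ => ?_)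
    have hρ0 : (0:ℝ) < ρ := hρ
    have h1 : setDistRho ρ A B ≤ C + 2 * ρ := by
      have := srho_le_bound (X := X) A B (ρ := ρ)
      rwa [max_eq_left hρ0.le] at this
    have hnn : 0 ≤ Real.exp (-ρ) * setDistRho ρ A B :=
      mul_nonneg (Real.exp_pos _).le (srho_nonneg A B ρ)
    rw [Real.norm_eq_abs, Real.norm_eq_abs, abs_of_nonneg hnn, abs_of_nonneg]
    · exact mul_le_mul_of_nonneg_left h1 (Real.exp_pos _).le
    · have : (0:ℝ) ≤ C + 2 * ρ := by positivity
      positivity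

lemma intSetDist_nonneg (A B : Set X) : 0 ≤ intSetDist A B := by
  refine setIntegral_nonneg measurableSet_Ioi fun ρ hρ => ?_
  exact mul_nonneg (Real.exp_pos _).le (srho_nonneg A B ρ)

lemma intSetDist_symm (A B : Set X) : intSetDist A B = intSetDist B A := by
  unfold intSetDist
  congr 1; ext ρ; rw [srho_symm]

lemma intSetDist_triangle (A B C : Set X) :
    intSetDist A C ≤ intSetDist A B + intSetDist B C := by
  unfold intSetDist
  rw [← integral_add (intSetDist_integrableOn A B) (intSetDist_integrableOn B C)]
  refine setIntegral_mono_on (intSetDist_integrableOn A C)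
    ((intSetDist_integrableOn A B).add (intSetDist_integrableOn B C))
    measurableSet_Ioi fun ρ hρ => ?_
  have := srho_triangle A B C ρ
  nlinarith [Real.exp_pos (-ρ), srho_nonneg A B ρ, srho_nonneg B C ρ, srho_nonneg A C ρ]

lemma srho_self (A : Set X) (ρ : ℝ) : setDistRho ρ A A = 0 :=
  le_antisymm (srho_le A A le_rfl (fun x _ => by simp)) (srho_nonneg A A ρ)

lemma intSetDist_self (A : Set X) : intSetDist A A = 0 := by
  unfold intSetDist
  have : ∀ ρ : ℝ, Real.exp (-ρ) * setDistRho ρ A A = 0 := fun ρ => by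
    rw [srho_self]; ring
  simp [this]

lemma eq_of_intSetDist_eq_zero {A B : Set X} (hA : IsClosed A) (hAne : A.Nonempty)
    (hB : IsClosed B) (hBne : B.Nonempty) (h : intSetDist A B = 0) : A = B := by
  -- first: setDistRho ρ A B = 0 for all ρ
  have hae : ∀ᵐ ρ ∂(volume.restrict (Set.Ioi (0:ℝ))),
      Real.exp (-ρ) * setDistRho ρ A B = 0 := by
    have hnn : 0 ≤ᵐ[volume.restrict (Set.Ioi (0:ℝ))]
        fun ρ => Real.exp (-ρ) * setDistRho ρ A B :=
      Filter.Eventually.of_forall fun ρ =>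
        mul_nonneg (Real.exp_pos _).le (srho_nonneg A B ρ)
    exact (integral_eq_zero_iff_of_nonneg_ae hnn (intSetDist_integrableOn A B)).1 h
  have hz : ∀ ρ : ℝ, setDistRho ρ A B = 0 := by
    intro ρ
    by_contra hne
    have hpos : 0 < setDistRho ρ A B := lt_of_le_of_ne (srho_nonneg A B ρ) (Ne.symm hne)
    have hsub : Set.Ioi (max ρ 0) ⊆ {s : ℝ | ¬ (Real.exp (-s) * setDistRho s A B = 0)} := by
      intro s hs
      have h1 : setDistRho ρ A B ≤ setDistRho s A B :=
        srho_mono A B (le_trans (le_max_left _ _) (le_of_lt hs))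
      have : 0 < Real.exp (-s) * setDistRho s A B :=
        mul_pos (Real.exp_pos _) (lt_of_lt_of_le hpos h1)
      exact ne_of_gt this
    have hmeas : volume.restrict (Set.Ioi (0:ℝ)) {s : ℝ | ¬ (Real.exp (-s) * setDistRho s A B = 0)} = 0 := hae
    have hge : volume.restrict (Set.Ioi (0:ℝ)) (Set.Ioi (max ρ 0)) = 0 :=
      measure_mono_null hsub hmeas
    rw [Measure.restrict_apply measurableSet_Ioi] at hge
    have : Set.Ioi (max ρ 0) ∩ Set.Ioi (0:ℝ) = Set.Ioi (max ρ 0) := by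
      refine Set.inter_eq_self_of_subset_left fun s hs => ?_
      exact lt_of_le_of_lt (le_max_right _ _) (Set.mem_Ioi.1 hs)
    rw [this] at hge
    simp [Real.volume_Ioi] at hge
  -- hence infDist agree
  have hinf : ∀ x : X, Metric.infDist x A = Metric.infDist x B := by
    intro x
    have hx : x ∈ Metric.closedBall (0:X) ‖x‖ := by
      simp [Metric.mem_closedBall]
    have := abs_le_srho A B hx
    rw [hz ‖x‖] at this
    have := abs_nonpos_iff.1 this
    linarith [abs_nonneg (Metric.infDist x A - Metric.infDist x B), sub_eq_zero.1 this]
  ext x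
  rw [hA.mem_iff_infDist_zero hAne, hB.mem_iff_infDist_zero hBne, hinf x]

variable [NormedSpace ℝ X] [FiniteDimensional ℝ X]

lemma eventually_srho_le (Ak : ℕ → Set X) (A : Set X)
    (h : ∀ x : X, Tendsto (fun k => Metric.infDist x (Ak k)) atTop
      (nhds (Metric.infDist x A))) (ρ : ℝ) {ε : ℝ} (hε : 0 < ε) :
    ∀ᶠ k in atTop, setDistRho ρ (Ak k) A ≤ ε := by
  obtain ⟨t, -, htfin, htcov⟩ :=
    (isCompact_closedBall (0:X) ρ).finite_cover_balls (e := ε/4) (by linarith)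
  have hev : ∀ᶠ k in atTop, ∀ y ∈ t,
      |Metric.infDist y (Ak k) - Metric.infDist y A| < ε/2 := by
    refine (Filter.eventually_all_finite htfin).2 fun y _ => ?_
    have := (h y).sub_const (Metric.infDist y A)
    have h0 : Metric.infDist y A - Metric.infDist y A = 0 := sub_self _
    rw [h0] at this
    have := this.abs
    rw [abs_zero] at this
    exact this.eventually_lt_const (by linarith)
  filter_upwards [hev] with k hk
  refine srho_le (Ak k) A hε.le fun x hx => ?_
  obtain ⟨y, hy, hxy⟩ := by
    have := htcov hx
    simpa using this
  have hxy' : dist x y < ε/4 := by simpa [Metric.mem_ball] using hxy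
  have l1 := infDist_abs_sub_le (Ak k) x y
  have l2 := infDist_abs_sub_le A x y
  have l3 := hk y hy
  have : |Metric.infDist x (Ak k) - Metric.infDist x A|
      ≤ |Metric.infDist x (Ak k) - Metric.infDist y (Ak k)| +
        |Metric.infDist y (Ak k) - Metric.infDist y A| +
        |Metric.infDist y A - Metric.infDist x A| := by
    have := abs_sub_le (Metric.infDist x (Ak k)) (Metric.infDist y (Ak k))
      (Metric.infDist x A)
    have h2 := abs_sub_le (Metric.infDist y (Ak k)) (Metric.infDist y A)
      (Metric.infDist x A)
    linarith
  have l2' : |Metric.infDist y A - Metric.infDist x A| ≤ dist x y := by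
    rw [abs_sub_comm]; exact l2
  linarith

lemma tendsto_srho_of_pointwise (Ak : ℕ → Set X) (A : Set X)
    (h : ∀ x : X, Tendsto (fun k => Metric.infDist x (Ak k)) atTop
      (nhds (Metric.infDist x A))) (ρ : ℝ) :
    Tendsto (fun k => setDistRho ρ (Ak k) A) atTop (nhds 0) := by
  rw [tendsto_order]
  constructor
  · intro a ha
    exact Filter.Eventually.of_forall fun k => lt_of_lt_of_le ha (srho_nonneg _ _ _)
  · intro a ha
    filter_upwards [eventually_srho_le Ak A h ρ (half_pos ha)] with k hk
    linarith

lemma tendsto_intSetDist_of_pointwise (Ak : ℕ → Set X) (A : Set X)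
    (h : ∀ x : X, Tendsto (fun k => Metric.infDist x (Ak k)) atTop
      (nhds (Metric.infDist x A))) :
    Tendsto (fun k => intSetDist (Ak k) A) atTop (nhds 0) := by
  -- uniform bound at 0
  have h0 : Tendsto (fun k => |Metric.infDist (0:X) (Ak k) - Metric.infDist (0:X) A|)
      atTop (nhds 0) := by
    have := ((h 0).sub_const (Metric.infDist (0:X) A)).abs
    simpa using this
  obtain ⟨M, hM⟩ := h0.bddAbove_range
  have hM' : ∀ k, |Metric.infDist (0:X) (Ak k) - Metric.infDist (0:X) A| ≤ M :=
    fun k => hM (Set.mem_range_self k)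
  have hM0 : 0 ≤ M := le_trans (abs_nonneg _) (hM' 0)
  have key : Tendsto (fun k => ∫ ρ in Set.Ioi (0:ℝ),
      Real.exp (-ρ) * setDistRho ρ (Ak k) A) atTop
      (nhds (∫ _ρ in Set.Ioi (0:ℝ), (0:ℝ))) := by
    refine MeasureTheory.tendsto_integral_of_dominated_convergence
      (fun ρ => Real.exp (-ρ) * (M + 2 * ρ)) ?_ ?_ ?_ ?_
    · intro k
      exact ((Real.measurable_exp.comp measurable_neg).mul
        (srho_measurable (Ak k) A)).aestronglyMeasurable
    · exact bound_integrable M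
    · intro k
      refine (ae_restrict_iff' measurableSet_Ioi).2 (Filter.Eventually.of_forall fun ρ hρ => ?_)
      have hρ0 : (0:ℝ) < ρ := hρ
      have h1 : setDistRho ρ (Ak k) A ≤ M + 2 * ρ := by
        have := srho_le_bound (X := X) (Ak k) A (ρ := ρ)
        rw [max_eq_left hρ0.le] at this
        linarith [hM' k]
      have hnn : 0 ≤ Real.exp (-ρ) * setDistRho ρ (Ak k) A :=
        mul_nonneg (Real.exp_pos _).le (srho_nonneg _ _ _)
      rw [Real.norm_eq_abs, abs_of_nonneg hnn]
      exact mul_le_mul_of_nonneg_left h1 (Real.exp_pos _).le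
    · refine Filter.Eventually.of_forall fun ρ => ?_
      have := (tendsto_srho_of_pointwise Ak A h ρ).const_mul (Real.exp (-ρ))
      simpa using this
  simpa [intSetDist] using key

lemma pointwise_of_PK (Ak : ℕ → Set X) (A : Set X)
    (hAkne : ∀ k, (Ak k).Nonempty) (hAne : A.Nonempty)
    (h1 : ∀ x ∈ A, Tendsto (fun k => Metric.infDist x (Ak k)) atTop (nhds 0))
    (h2 : ∀ x : X, liminf (fun k => Metric.infDist x (Ak k)) atTop = 0 → x ∈ A)
    (x : X) :
    Tendsto (fun k => Metric.infDist x (Ak k)) atTop (nhds (Metric.infDist x A)) := by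
  rw [tendsto_order]
  constructor
  · -- lower bound: ∀ b < infDist x A, eventually b < infDist x (Ak k)
    intro b hb
    by_cases hb0 : b < 0
    · exact Filter.Eventually.of_forall fun k =>
        lt_of_lt_of_le hb0 Metric.infDist_nonneg
    push_neg at hb0
    by_contra hcon
    rw [Filter.not_eventually] at hcon
    have hcon' : ∃ᶠ k in atTop, Metric.infDist x (Ak k) ≤ b := by
      refine hcon.mono fun k hk => ?_
      push_neg at hk; exact hk
    obtain ⟨φ, hφ, hφle⟩ := Filter.extraction_of_frequently_atTop hcon'
    set ε := Metric.infDist x A - b with hε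
    have hεpos : 0 < ε := by simp [hε]; linarith
    -- choose points in Ak (φ j)
    have hy : ∀ j : ℕ, ∃ y ∈ Ak (φ j), dist x y < b + ε/2 := by
      intro j
      rw [← Metric.infDist_lt_iff (hAkne (φ j))]
      calc Metric.infDist x (Ak (φ j)) ≤ b := hφle j
        _ < b + ε/2 := by linarith
    choose y hymem hydist using hy
    have hyball : ∀ j, y j ∈ Metric.closedBall x (b + ε/2) := fun j => by
      rw [Metric.mem_closedBall, dist_comm]
      exact (hydist j).le
    obtain ⟨z, hz, ψ, hψ, hzlim⟩ :=
      (isCompact_closedBall x (b + ε/2)).tendsto_subseq hyball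
    -- subsequence of infDist z (Ak k) tends to 0
    have hsub : Tendsto (fun j => Metric.infDist z (Ak (φ (ψ j)))) atTop (nhds 0) := by
      refine squeeze_zero (fun j => Metric.infDist_nonneg) (g := fun j => dist z (y (ψ j)))
        (fun j => Metric.infDist_le_dist_of_mem (hymem (ψ j))) ?_
      have : Tendsto (fun j => y (ψ j)) atTop (nhds z) := hzlim
      simpa using (tendsto_const_nhds.dist this : Tendsto (fun j => dist z (y (ψ j))) atTop (nhds (dist z z)))
    -- liminf over full sequence is 0
    have hliminf : liminf (fun k => Metric.infDist z (Ak k)) atTop = 0 := by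
      rw [Filter.liminf_eq]
      have hset : {a : ℝ | ∀ᶠ k in atTop, a ≤ Metric.infDist z (Ak k)} = Set.Iic 0 := by
        ext a
        constructor
        · intro ha
          have hmap : Tendsto (fun j => φ (ψ j)) atTop atTop :=
            (hφ.comp hψ).tendsto_atTop
          have hev : ∀ᶠ j in atTop, a ≤ Metric.infDist z (Ak (φ (ψ j))) :=
            hmap.eventually ha
          exact ge_of_tendsto hsub hev
        · intro ha
          exact Filter.Eventually.of_forall fun k =>
            le_trans ha Metric.infDist_nonneg
      rw [hset, csSup_Iic]
    have hzA : z ∈ A := h2 z hliminf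
    have : Metric.infDist x A ≤ dist x z := Metric.infDist_le_dist_of_mem hzA
    have hzd : dist x z ≤ b + ε/2 := by
      rw [Metric.mem_closedBall] at hz; rwa [dist_comm]
    have : Metric.infDist x A ≤ b + ε/2 := le_trans this hzd
    simp [hε] at this
    linarith
  · -- upper bound
    intro b hb
    obtain ⟨y, hyA, hxy⟩ := Metric.infDist_lt_iff hAne |>.1
      (show Metric.infDist x A < Metric.infDist x A + (b - Metric.infDist x A)/2 by linarith)
    have hev : ∀ᶠ k in atTop, Metric.infDist y (Ak k) < (b - Metric.infDist x A)/2 :=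
      (h1 y hyA).eventually_lt_const (by linarith)
    filter_upwards [hev] with k hk
    calc Metric.infDist x (Ak k) ≤ Metric.infDist y (Ak k) + dist x y :=
        Metric.infDist_le_infDist_add_dist
      _ < b := by linarith

lemma srho_mul_le_intSetDist (A B : Set X) {ρ : ℝ} (hρ : 0 < ρ) :
    setDistRho ρ A B * (Real.exp (-ρ) - Real.exp (-(ρ+1))) ≤ intSetDist A B := by
  have hIoc : Set.Ioc ρ (ρ+1) ⊆ Set.Ioi (0:ℝ) := fun s hs => lt_trans hρ hs.1
  have hint : IntegrableOn (fun s : ℝ => Real.exp (-s) * setDistRho s A B)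
      (Set.Ioc ρ (ρ+1)) := (intSetDist_integrableOn A B).mono_set hIoc
  have hexp : IntegrableOn (fun s : ℝ => Real.exp (-s) * setDistRho ρ A B)
      (Set.Ioc ρ (ρ+1)) := by
    have h1 : IntegrableOn (fun s : ℝ => Real.exp (-1 * s)) (Set.Ioi (0:ℝ)) :=
      exp_neg_integrableOn_Ioi 0 one_pos
    have h2 : IntegrableOn (fun s : ℝ => Real.exp (-1 * s) * setDistRho ρ A B)
        (Set.Ioc ρ (ρ+1)) := (h1.mono_set hIoc).mul_const (setDistRho ρ A B)
    exact h2.congr_fun (fun s _ => by norm_num) measurableSet_Ioc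
  have step1 : (∫ s in Set.Ioc ρ (ρ+1), Real.exp (-s) * setDistRho ρ A B)
      ≤ ∫ s in Set.Ioc ρ (ρ+1), Real.exp (-s) * setDistRho s A B := by
    refine setIntegral_mono_on hexp hint measurableSet_Ioc fun s hs => ?_
    exact mul_le_mul_of_nonneg_left (srho_mono A B hs.1.le) (Real.exp_pos _).le
  have step2 : (∫ s in Set.Ioc ρ (ρ+1), Real.exp (-s) * setDistRho s A B)
      ≤ intSetDist A B := by
    unfold intSetDist
    refine setIntegral_mono_set (intSetDist_integrableOn A B) ?_ ?_
    · exact Filter.Eventually.of_forall fun s =>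
        mul_nonneg (Real.exp_pos _).le (srho_nonneg A B s)
    · exact HasSubset.Subset.eventuallyLE hIoc
  have step0 : (∫ s in Set.Ioc ρ (ρ+1), Real.exp (-s) * setDistRho ρ A B)
      = setDistRho ρ A B * (Real.exp (-ρ) - Real.exp (-(ρ+1))) := by
    rw [← intervalIntegral.integral_of_le (by linarith : ρ ≤ ρ + 1)]
    rw [intervalIntegral.integral_mul_const]
    rw [intervalIntegral.integral_comp_neg (fun s => Real.exp s), integral_exp]
    ring
  linarith

lemma tendsto_srho_of_intSetDist (Ak : ℕ → Set X) (A : Set X) {ρ : ℝ} (hρ : 0 < ρ)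
    (h : Tendsto (fun k => intSetDist (Ak k) A) atTop (nhds 0)) :
    Tendsto (fun k => setDistRho ρ (Ak k) A) atTop (nhds 0) := by
  have hc : 0 < Real.exp (-ρ) - Real.exp (-(ρ+1)) := by
    have : Real.exp (-(ρ+1)) < Real.exp (-ρ) := Real.exp_lt_exp.2 (by linarith)
    linarith
  refine squeeze_zero (fun k => srho_nonneg _ _ _)
    (g := fun k => (Real.exp (-ρ) - Real.exp (-(ρ+1)))⁻¹ * intSetDist (Ak k) A)
    (fun k => ?_) ?_
  · have := srho_mul_le_intSetDist (Ak k) A hρ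
    rw [le_inv_mul_iff₀ hc]
    linarith
  · have := h.const_mul (Real.exp (-ρ) - Real.exp (-(ρ+1)))⁻¹
    simpa using this

lemma pointwise_of_intSetDist (Ak : ℕ → Set X) (A : Set X)
    (h : Tendsto (fun k => intSetDist (Ak k) A) atTop (nhds 0)) (x : X) :
    Tendsto (fun k => Metric.infDist x (Ak k)) atTop (nhds (Metric.infDist x A)) := by
  have hρ : (0:ℝ) < ‖x‖ + 1 := by positivity
  have hsup := tendsto_srho_of_intSetDist Ak A hρ h
  have hx : x ∈ Metric.closedBall (0:X) (‖x‖ + 1) := by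
    simp [Metric.mem_closedBall]
  rw [tendsto_iff_dist_tendsto_zero]
  refine squeeze_zero (fun k => dist_nonneg) (fun k => ?_) hsup
  rw [Real.dist_eq]
  exact abs_le_srho (Ak k) A hx


end Aux

/-- On a finite-dimensional normed space, the integrated set distance `d̄` is a metric on
the collection of nonempty closed sets, and a sequence of nonempty closed sets converges
in the Painlevé–Kuratowski sense iff it converges with respect to `d̄`. -/
theorem stmt17 {X : Type*} [NormedAddCommGroup X] [NormedSpace ℝ X]
    [FiniteDimensional ℝ X] :
    (∀ A B : Set X, IsClosed A → A.Nonempty → IsClosed B → B.Nonempty →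
        0 ≤ intSetDist A B ∧ (intSetDist A B = 0 ↔ A = B) ∧
        intSetDist A B = intSetDist B A) ∧
    (∀ A B C : Set X, IsClosed A → A.Nonempty → IsClosed B → B.Nonempty →
        IsClosed C → C.Nonempty → intSetDist A C ≤ intSetDist A B + intSetDist B C) ∧
    (∀ (Ak : ℕ → Set X) (A : Set X), (∀ k, IsClosed (Ak k)) → (∀ k, (Ak k).Nonempty) →
        IsClosed A → A.Nonempty →
        (((∀ x ∈ A, Tendsto (fun k => Metric.infDist x (Ak k)) atTop (nhds 0)) ∧
            (∀ x : X, liminf (fun k => Metric.infDist x (Ak k)) atTop = 0 → x ∈ A)) ↔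
          Tendsto (fun k => intSetDist (Ak k) A) atTop (nhds 0))) := by
  refine ⟨?_, ?_, ?_⟩
  · intro A B hA hAne hB hBne
    refine ⟨intSetDist_nonneg A B, ⟨?_, ?_⟩, intSetDist_symm A B⟩
    · exact eq_of_intSetDist_eq_zero hA hAne hB hBne
    · rintro rfl; exact intSetDist_self A
  · intro A B C _ _ _ _ _ _
    exact intSetDist_triangle A B C
  · intro Ak A hAkcl hAkne hA hAne
    constructor
    · rintro ⟨h1, h2⟩
      exact tendsto_intSetDist_of_pointwise Ak A
        (pointwise_of_PK Ak A hAkne hAne h1 h2)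
    · intro h
      have hpt := pointwise_of_intSetDist Ak A h
      constructor
      · intro x hx
        have := hpt x
        rwa [Metric.infDist_zero_of_mem hx] at this
      · intro x hx
        rw [(hpt x).liminf_eq] at hx
        exact (hA.mem_iff_infDist_zero hAne).2 hx
end
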